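/- Let (X, μ, h) be a probability measure preserving system, let 𝓛 be a linear subspace of L²(X, μ) with a norm ‖·‖_𝓛, and suppose there exist δ, C > 0 such that for every φ ∈ L^∞(X, μ), every ψ ∈ 𝓛 and every n ∈ ℕ, |∫_X φ(h^n x) ψ(x) dμ(x) − ∫_X φ dμ · ∫_X ψ dμ| ≤ C ‖φ‖_{L^∞} ‖ψ‖_𝓛 n^{−δ}. Then for every k ∈ ℕ, every f_0 ∈ 𝓛 ∩ L^∞(X, μ) with ∫_X f_0 dμ = 0, every f_1, …, f_k ∈ L^∞(X, μ), and all natural numbers n_1 < n_2 < ⋯ < n_k, one has |∫_X f_0(x) f_1(h^{n_1}x) ⋯ f_k(h^{n_k}x) dμ(x)| ≤ C ‖f_1‖_{L^∞} ⋯ ‖f_k‖_{L^∞} ‖f_0‖_𝓛 · n_1^{−δ}. -/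

import Mathlib

open MeasureTheory Filter

lemma eLpNorm_top_prod_le {X : Type*} [MeasurableSpace X] (μ : Measure X)
    {k : ℕ} (g : Fin k → X → ℝ) (hg : ∀ i, AEStronglyMeasurable (g i) μ) (s : Finset (Fin k)) :
    eLpNorm (fun x => ∏ i ∈ s, g i x) ⊤ μ ≤ ∏ i ∈ s, eLpNorm (g i) ⊤ μ := by
  classical
  induction s using Finset.cons_induction with
  | empty =>
      simp only [Finset.prod_empty, eLpNorm_exponent_top]
      exact eLpNormEssSup_le_of_ae_nnnorm_bound (C := 1) (Eventually.of_forall (by simp))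
  | cons a s ha ih =>
      simp only [Finset.prod_cons]
      calc eLpNorm (fun x => g a x * ∏ i ∈ s, g i x) ⊤ μ
          ≤ eLpNorm (g a) ⊤ μ * eLpNorm (fun x => ∏ i ∈ s, g i x) ⊤ μ := by
            have := eLpNorm_smul_le_eLpNorm_top_mul_eLpNorm (p := ⊤)
              (f := fun x => ∏ i ∈ s, g i x)
              (Finset.aestronglyMeasurable_fun_prod _ fun i _ => hg i) (g a)
            exact this
        _ ≤ _ := by gcongr


theorem effective_decay_gives_multiple_bound
    {X : Type*} [MeasurableSpace X] (μ : Measure X) [IsProbabilityMeasure μ]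
    (h : X → X) (hmeas : Measurable h) (hpres : MeasurePreserving h μ μ)
    (𝓛 : Submodule ℝ (X → ℝ))
    (h𝓛meas : ∀ f ∈ 𝓛, Measurable f)
    (h𝓛L2 : ∀ f ∈ 𝓛, MemLp f 2 μ)
    (nrm : (X → ℝ) → ℝ)
    (hnrm_nonneg : ∀ ψ ∈ 𝓛, 0 ≤ nrm ψ)
    (hnrm_definite : ∀ ψ ∈ 𝓛, nrm ψ = 0 → ψ = 0)
    (hnrm_smul : ∀ (a : ℝ), ∀ ψ ∈ 𝓛, nrm (a • ψ) = |a| * nrm ψ)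
    (hnrm_add : ∀ ψ₁ ∈ 𝓛, ∀ ψ₂ ∈ 𝓛, nrm (ψ₁ + ψ₂) ≤ nrm ψ₁ + nrm ψ₂)
    (δ C : ℝ) (hδ : 0 < δ) (hC : 0 < C)
    (hcorr : ∀ φ : X → ℝ, Measurable φ → MemLp φ ⊤ μ → ∀ ψ ∈ 𝓛, ∀ n : ℕ, 1 ≤ n →
      |(∫ x, φ (h^[n] x) * ψ x ∂μ) - (∫ x, φ x ∂μ) * ∫ x, ψ x ∂μ| ≤
        C * (eLpNorm φ ⊤ μ).toReal * nrm ψ * (n : ℝ) ^ (-δ)) :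
    ∀ (k : ℕ) (hk : 0 < k),
      ∀ f₀ : X → ℝ, f₀ ∈ 𝓛 → MemLp f₀ ⊤ μ → (∫ x, f₀ x ∂μ) = 0 →
      ∀ f : Fin k → X → ℝ, (∀ i, Measurable (f i) ∧ MemLp (f i) ⊤ μ) →
      ∀ n : Fin k → ℕ, (∀ i, 1 ≤ n i) → StrictMono n →
        |∫ x, f₀ x * ∏ i, f i (h^[n i] x) ∂μ| ≤
          C * (∏ i, (eLpNorm (f i) ⊤ μ).toReal) * nrm f₀ *
            ((n ⟨0, hk⟩ : ℝ) ^ (-δ)) := by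
  intro k hk f₀ hf₀L hf₀top hf₀int f hf n hn hmono
  set n₀ : ℕ := n ⟨0, hk⟩ with hn₀
  have hle : ∀ i : Fin k, n₀ ≤ n i := fun i =>
    hmono.monotone (by simp [Fin.le_def])
  set φ : X → ℝ := fun y => ∏ i, f i (h^[n i - n₀] y) with hφ
  -- measurability of φ
  have hφmeas : Measurable φ :=
    Finset.measurable_prod _ fun i _ => (hf i).1.comp (hmeas.iterate _)
  -- eLpNorm bound for φ
  have hcomp : ∀ (i : Fin k) (m : ℕ),
      eLpNorm (fun y => f i (h^[m] y)) ⊤ μ = eLpNorm (f i) ⊤ μ := fun i m =>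
    eLpNorm_comp_measurePreserving (hf i).1.aestronglyMeasurable (hpres.iterate m)
  have hφbound : eLpNorm φ ⊤ μ ≤ ∏ i, eLpNorm (f i) ⊤ μ := by
    have := eLpNorm_top_prod_le μ (fun i y => f i (h^[n i - n₀] y))
      (fun i => ((hf i).1.comp (hmeas.iterate _)).aestronglyMeasurable) Finset.univ
    refine this.trans (le_of_eq ?_)
    exact Finset.prod_congr rfl fun i _ => hcomp i _
  have hprodlt : (∏ i, eLpNorm (f i) ⊤ μ) ≠ ⊤ :=
    (ENNReal.prod_lt_top (fun i _ => (hf i).2.eLpNorm_lt_top)).ne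
  have hφmem : MemLp φ ⊤ μ :=
    ⟨hφmeas.aestronglyMeasurable, lt_of_le_of_lt hφbound hprodlt.lt_top⟩
  -- rewrite the integral
  have hrw : (∫ x, f₀ x * ∏ i, f i (h^[n i] x) ∂μ)
      = ∫ x, φ (h^[n₀] x) * f₀ x ∂μ := by
    refine integral_congr_ae (Eventually.of_forall fun x => ?_)
    simp only
    rw [mul_comm]
    congr 1
    rw [hφ]
    refine Finset.prod_congr rfl fun i _ => ?_
    rw [← Function.iterate_add_apply, Nat.sub_add_cancel (hle i)]
  have key := hcorr φ hφmeas hφmem f₀ hf₀L n₀ (hn _)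
  rw [hf₀int, mul_zero, sub_zero] at key
  rw [hrw]
  refine key.trans ?_
  have h1 : (eLpNorm φ ⊤ μ).toReal ≤ ∏ i, (eLpNorm (f i) ⊤ μ).toReal := by
    rw [← ENNReal.toReal_prod]
    exact ENNReal.toReal_mono hprodlt hφbound
  have h2 : (0:ℝ) ≤ (n₀ : ℝ) ^ (-δ) := Real.rpow_nonneg (Nat.cast_nonneg _) _
  gcongr
  exact hnrm_nonneg _ hf₀L
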